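/- Let A be an affine set of n points on S² with symmetry group F. The orderings of A realize exactly n!/|F| pairwise distinct labeled affine order types, and this number is at least (n−1)!. -/

import Mathlib

open scoped RealInnerProductSpace

noncomputable section

abbrev E3 := EuclideanSpace ℝ (Fin 3)

/-- Determinant of the 3×3 matrix whose rows are `p`, `q`, `r`. -/
def det3 (p q r : E3) : ℝ := Matrix.det (Matrix.of ![fun i => p i, fun i => q i, fun i => r i])

/-- The orientation `sgn(p,q,r)` of a triple of points: the sign of `det3 p q r`. -/
def sgn3 (p q r : E3) : ℝ := Real.sign (det3 p q r)

/-- An affine set: a finite subset of the unit sphere contained in an open hemisphere. -/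
def IsAffineSet (A : Set E3) : Prop :=
  A.Finite ∧ A ⊆ Metric.sphere (0 : E3) 1 ∧ ∃ v : E3, ∀ p ∈ A, 0 < ⟪v, p⟫

/-- General position for an affine set: no three of its points are coplanar with the origin. -/
def GenPos (A : Set E3) : Prop :=
  ∀ p ∈ A, ∀ q ∈ A, ∀ r ∈ A, p ≠ q → p ≠ r → q ≠ r → det3 p q r ≠ 0

/-- `p` is extreme in `A`: some great circle strictly separates `p` from `A \ {p}`. -/
def IsExtremePt (p : E3) (A : Set E3) : Prop :=
  ∃ v : E3, 0 < ⟪v, p⟫ ∧ ∀ q ∈ A, q ≠ p → ⟪v, q⟫ < 0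

/-- `f` preserves orientations on `S`. -/
def OrientationPreservingOn (f : E3 → E3) (S : Set E3) : Prop :=
  ∀ p ∈ S, ∀ q ∈ S, ∀ r ∈ S, sgn3 (f p) (f q) (f r) = sgn3 p q r

/-- The symmetry group of a set `A ⊆ S²`: the orientation preserving permutations of `A`. -/
def symGroup (A : Set E3) : Subgroup (Equiv.Perm ↥A) where
  carrier := {f | ∀ p q r : ↥A, sgn3 (f p) (f q) (f r) = sgn3 p q r}
  one_mem' := by intro p q r; rfl
  mul_mem' := by
    intro f g hf hg p q r
    simpa [Equiv.Perm.mul_apply] using (hf (g p) (g q) (g r)).trans (hg p q r)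
  inv_mem' := by
    intro f hf p q r
    simpa using (hf (f⁻¹ p) (f⁻¹ q) (f⁻¹ r)).symm

lemma inner3 (w p : E3) : ⟪w, p⟫ = w 0 * p 0 + w 1 * p 1 + w 2 * p 2 := by
  simp [PiLp.inner_apply, Fin.sum_univ_three, RCLike.inner_apply, conj_trivial]; ring

lemma det3_expand (p q r : E3) : det3 p q r =
    p 0 * q 1 * r 2 - p 0 * q 2 * r 1 - p 1 * q 0 * r 2 + p 1 * q 2 * r 0
      + p 2 * q 0 * r 1 - p 2 * q 1 * r 0 := by
  simp [det3, Matrix.det_fin_three]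

lemma cramer4 (w p q r s : E3) :
    det3 q r s * ⟪w, p⟫ - det3 p r s * ⟪w, q⟫ + det3 p q s * ⟪w, r⟫ - det3 p q r * ⟪w, s⟫ = 0 := by
  simp only [det3_expand, inner3]; ring

lemma det3_swap12 (p q r : E3) : det3 q p r = - det3 p q r := by
  simp only [det3_expand]; ring

lemma det3_swap23 (p q r : E3) : det3 p r q = - det3 p q r := by
  simp only [det3_expand]; ring

lemma det3_self (p q : E3) : det3 p q q = 0 := by simp only [det3_expand]; ring

lemma det3_trans {u v p q r s : E3} (hup : 0 < ⟪u, p⟫) (huq : 0 < ⟪u, q⟫) (hur : 0 < ⟪u, r⟫)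
    (hus : 0 < ⟪u, s⟫) (hvp : 0 < ⟪v, p⟫) (hvq : ⟪v, q⟫ < 0) (hvr : ⟪v, r⟫ < 0)
    (hvs : ⟪v, s⟫ < 0) (h1 : 0 < det3 p q r) (h2 : 0 < det3 p r s) : 0 < det3 p q s := by
  have Eu := cramer4 u p q r s
  have Ev := cramer4 v p q r s
  have hα : 0 < ⟪u, q⟫ * ⟪v, p⟫ - ⟪v, q⟫ * ⟪u, p⟫ := by nlinarith
  have hβ : 0 < ⟪u, r⟫ * ⟪v, p⟫ - ⟪v, r⟫ * ⟪u, p⟫ := by nlinarith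
  have hγ : 0 < ⟪u, s⟫ * ⟪v, p⟫ - ⟪v, s⟫ * ⟪u, p⟫ := by nlinarith
  nlinarith [mul_pos h2 hα, mul_pos h1 hγ]


/-- a vector not orthogonal to any of finitely many nonzero vectors -/
lemma exists_generic (D : Finset E3) (hD : (0:E3) ∉ D) : ∃ w : E3, ∀ d ∈ D, ⟪w, d⟫ ≠ 0 := by
  classical
  induction D using Finset.induction with
  | empty => exact ⟨0, by simp⟩
  | @insert d D hd ih =>
    obtain ⟨w, hw⟩ := ih (fun h => hD (Finset.mem_insert_of_mem h))
    have hd0 : d ≠ 0 := fun h => hD (h ▸ Finset.mem_insert_self d D)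
    set bad : Finset ℝ := (insert d D).image (fun d' => -⟪w, d'⟫ / ⟪d, d'⟫) with hbad
    obtain ⟨t, ht⟩ := Infinite.exists_notMem_finset bad
    refine ⟨w + t • d, ?_⟩
    intro d' hd'
    rw [inner_add_left, real_inner_smul_left]
    intro hzero
    have hdd' : ⟪d, d'⟫ ≠ 0 := by
      rcases Finset.mem_insert.mp hd' with rfl | hmem
      · exact fun h => hd0 (inner_self_eq_zero.mp h)
      · intro h
        rw [h, mul_zero, add_zero] at hzero
        exact hw d' hmem hzero
    apply ht
    rw [hbad]
    refine Finset.mem_image.mpr ⟨d', hd', ?_⟩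
    show -⟪w, d'⟫ / ⟪d, d'⟫ = t
    rw [div_eq_iff hdd']
    linarith

lemma exists_extreme {A : Set E3} (hA : IsAffineSet A) (hne : A.Nonempty) :
    ∃ p ∈ A, IsExtremePt p A := by
  classical
  obtain ⟨hfin, hsph, u, hu⟩ := hA
  -- normalization
  set nh : E3 → E3 := fun q => (⟪u, q⟫)⁻¹ • q with hnh
  have hback : ∀ q ∈ A, (⟪u, q⟫) • nh q = q := by
    intro q hq
    rw [hnh]; simp only [smul_smul]
    rw [mul_inv_cancel₀ (ne_of_gt (hu q hq)), one_smul]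
  have hwinner : ∀ (w : E3), ∀ q ∈ A, ⟪w, q⟫ = ⟪u, q⟫ * ⟪w, nh q⟫ := by
    intro w q hq
    conv_lhs => rw [← hback q hq]
    rw [real_inner_smul_right]
  have hinj : ∀ q ∈ A, ∀ r ∈ A, nh q = nh r → q = r := by
    intro q hq r hr h
    have h1 : q = (⟪u, q⟫ * (⟪u, r⟫)⁻¹) • r := by
      have hr' : (⟪u, r⟫)⁻¹ • r = nh r := rfl
      rw [mul_smul, hr', ← h, hback q hq]
    have hnq : ‖q‖ = 1 := by simpa using mem_sphere_zero_iff_norm.mp (hsph hq)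
    have hnr : ‖r‖ = 1 := by simpa using mem_sphere_zero_iff_norm.mp (hsph hr)
    have hc : 0 < ⟪u, q⟫ * (⟪u, r⟫)⁻¹ := mul_pos (hu q hq) (inv_pos.mpr (hu r hr))
    have : ‖q‖ = |⟪u, q⟫ * (⟪u, r⟫)⁻¹| * ‖r‖ := by
      have := congrArg norm h1
      rwa [norm_smul, Real.norm_eq_abs] at this
    rw [hnq, hnr, mul_one, abs_of_pos hc] at this
    rw [h1, ← this, one_smul]
  -- generic direction
  set F : Finset E3 := hfin.toFinset with hF
  set D : Finset E3 := ((F ×ˢ F).filter (fun x => x.1 ≠ x.2)).image (fun x => nh x.1 - nh x.2)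
    with hD
  have hD0 : (0:E3) ∉ D := by
    intro h
    rw [hD] at h
    obtain ⟨⟨q, r⟩, hmem, heq⟩ := Finset.mem_image.mp h
    rw [Finset.mem_filter] at hmem
    obtain ⟨hqr, hne'⟩ := hmem
    rw [Finset.mem_product] at hqr
    have hq : q ∈ A := hfin.mem_toFinset.mp hqr.1
    have hr : r ∈ A := hfin.mem_toFinset.mp hqr.2
    exact hne' (hinj q hq r hr (sub_eq_zero.mp heq))
  obtain ⟨w, hw⟩ := exists_generic D hD0
  have hsep : ∀ q ∈ A, ∀ r ∈ A, q ≠ r → ⟪w, nh q⟫ ≠ ⟪w, nh r⟫ := by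
    intro q hq r hr hne'
    have : (nh q - nh r) ∈ D := by
      rw [hD]
      exact Finset.mem_image.mpr ⟨(q, r), Finset.mem_filter.mpr
        ⟨Finset.mem_product.mpr ⟨hfin.mem_toFinset.mpr hq, hfin.mem_toFinset.mpr hr⟩, hne'⟩, rfl⟩
    have := hw _ this
    rw [inner_sub_right] at this
    exact sub_ne_zero.mp this
  -- maximizer
  obtain ⟨p, hpA, hpmax⟩ := Finset.exists_max_image F (fun q => ⟪w, nh q⟫)
    (by rwa [hF, Set.Finite.toFinset_nonempty])
  have hpA' : p ∈ A := hfin.mem_toFinset.mp hpA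
  refine ⟨p, hpA', ?_⟩
  by_cases hsing : ∀ q ∈ A, q = p
  · exact ⟨u, hu p hpA', fun q hq hqp => absurd (hsing q hq) hqp⟩
  push_neg at hsing
  obtain ⟨q0, hq0, hq0p⟩ := hsing
  -- second max
  set F' : Finset E3 := F.erase p with hF'
  have hF'ne : F'.Nonempty := ⟨q0, Finset.mem_erase.mpr ⟨hq0p, hfin.mem_toFinset.mpr hq0⟩⟩
  obtain ⟨p2, hp2, hp2max⟩ := Finset.exists_max_image F' (fun q => ⟪w, nh q⟫) hF'ne
  have hp2A : p2 ∈ A := hfin.mem_toFinset.mp (Finset.mem_of_mem_erase hp2)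
  have hlt : ⟪w, nh p2⟫ < ⟪w, nh p⟫ :=
    lt_of_le_of_ne (hpmax p2 (Finset.mem_of_mem_erase hp2))
      (hsep p2 hp2A p hpA' (Finset.ne_of_mem_erase hp2))
  set c : ℝ := (⟪w, nh p2⟫ + ⟪w, nh p⟫) / 2 with hc
  refine ⟨w - c • u, ?_, ?_⟩
  · rw [inner_sub_left, real_inner_smul_left, hwinner w p hpA']
    have : c < ⟪w, nh p⟫ := by rw [hc]; linarith
    nlinarith [hu p hpA']
  · intro q hq hqp
    rw [inner_sub_left, real_inner_smul_left, hwinner w q hq]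
    have h1 : ⟪w, nh q⟫ ≤ ⟪w, nh p2⟫ :=
      hp2max q (Finset.mem_erase.mpr ⟨hqp, hfin.mem_toFinset.mpr hq⟩)
    have : ⟪w, nh q⟫ < c := by rw [hc]; linarith
    nlinarith [hu q hq]

lemma sign_pos_congr {x y : ℝ} (h : Real.sign x = Real.sign y) (hx : x ≠ 0) (hy : y ≠ 0) :
    0 < x ↔ 0 < y := by
  constructor
  · intro hxp
    by_contra hyp
    have hyn : y < 0 := hy.lt_or_gt.resolve_right hyp
    rw [Real.sign_of_pos hxp, Real.sign_of_neg hyn] at h; norm_num at h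
  · intro hyp
    by_contra hxp
    have hxn : x < 0 := hx.lt_or_gt.resolve_right hxp
    rw [Real.sign_of_neg hxn, Real.sign_of_pos hyp] at h; norm_num at h

lemma symGroup_fix_extreme {A : Set E3} (hA : IsAffineSet A) (hgp : GenPos A)
    {p : ↥A} (hp : IsExtremePt ↑p A) {f : Equiv.Perm ↥A} (hf : f ∈ symGroup A)
    (hfp : f p = p) : f = 1 := by
  classical
  obtain ⟨hfin, -, u, hu⟩ := hA
  obtain ⟨v, hvp, hvs⟩ := hp
  haveI : Finite ↥A := hfin.to_subtype
  have hfmem : ∀ a b c : ↥A, sgn3 (f a) (f b) (f c) = sgn3 a b c := hf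
  -- the angular strict total order around p
  let T : Type := {q : ↥A // q ≠ p}
  let r : T → T → Prop := fun a b => 0 < det3 p.1 a.1.1 b.1.1
  have hnep : ∀ a : T, (p.1 : E3) ≠ a.1.1 := by
    intro a h
    exact a.2 (Subtype.ext h.symm)
  have hneab : ∀ a b : T, a ≠ b → (a.1.1 : E3) ≠ b.1.1 := by
    intro a b hab h
    exact hab (Subtype.ext (Subtype.ext h))
  have hdet_ne : ∀ a b : T, a ≠ b → det3 p.1 a.1.1 b.1.1 ≠ 0 := fun a b hab =>
    hgp p.1 p.2 a.1.1 a.1.2 b.1.1 b.1.2 (hnep a) (hnep b) (hneab a b hab)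
  have hswap : ∀ a b : T, det3 p.1 b.1.1 a.1.1 = - det3 p.1 a.1.1 b.1.1 := fun a b =>
    det3_swap23 p.1 a.1.1 b.1.1
  haveI htri : IsTrichotomous T r := by
    constructor
    intro a b hab hba
    by_contra h
    rcases (hdet_ne a b h).lt_or_gt with hlt | hlt
    · apply hba
      show 0 < det3 p.1 b.1.1 a.1.1
      rw [hswap a b]; linarith
    · exact hab hlt
  haveI hirr : IsIrrefl T r := by
    constructor
    intro a ha
    have : det3 p.1 a.1.1 a.1.1 = 0 := det3_self _ _
    change 0 < det3 p.1 a.1.1 a.1.1 at ha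
    linarith
  haveI htrans : IsTrans T r := by
    constructor
    intro a b c hab hbc
    exact det3_trans (hu p.1 p.2) (hu a.1.1 a.1.2) (hu b.1.1 b.1.2) (hu c.1.1 c.1.2)
      hvp (hvs a.1.1 a.1.2 (hnep a).symm) (hvs b.1.1 b.1.2 (hnep b).symm)
      (hvs c.1.1 c.1.2 (hnep c).symm) hab hbc
  haveI hsto : IsStrictTotalOrder T r := { }
  letI lin : LinearOrder T := linearOrderOfSTO r
  haveI : Finite T := Subtype.finite
  -- the induced equivalence on T
  have hfix : ∀ q : ↥A, f q = p ↔ q = p := by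
    intro q
    constructor
    · intro h; exact f.injective (h.trans hfp.symm)
    · intro h; rw [h, hfp]
  let g : T ≃ T := f.subtypeEquiv (fun q => not_congr (hfix q).symm)
  have hgr : ∀ a b : T, r a b ↔ r (g a) (g b) := by
    intro a b
    have hs := hfmem p a.1 b.1
    rw [hfp] at hs
    rcases eq_or_ne a b with h | h
    · subst h
      constructor
      · intro hh; exact absurd hh (hirr.irrefl a)
      · intro hh; exact absurd hh (hirr.irrefl (g a))
    have h1 : det3 p.1 a.1.1 b.1.1 ≠ 0 := hdet_ne a b h
    have h2 : det3 p.1 (f a.1).1 (f b.1).1 ≠ 0 := by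
      have hne' : g a ≠ g b := fun hh => h (g.injective hh)
      exact hdet_ne (g a) (g b) hne'
    exact (sign_pos_congr hs h2 h1).symm
  have hmono : StrictMono g := by
    intro a b hab
    exact (hgr a b).mp hab
  have hgid : ∀ a : T, g a = a := by
    have : (StrictMono.orderIsoOfSurjective g hmono g.surjective) = OrderIso.refl T :=
      Subsingleton.elim _ _
    intro a
    simpa using DFunLike.congr_fun this a
  apply Equiv.ext
  intro q
  rcases eq_or_ne q p with h | h
  · rw [h, hfp]; rfl
  · have h1 := hgid ⟨q, h⟩
    have h2 : f q = q := by
      simpa [g, Equiv.subtypeEquiv] using congrArg Subtype.val h1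
    simpa using h2

/-- An affine set `A` of `n` points with symmetry group `F` realizes,
over all orderings of its points, exactly `n! / |F|` pairwise distinct labeled affine
order types (recorded as the triple-orientation functions on labels), and this number is
at least `(n−1)!`. -/
theorem stmt13 (A : Set E3) (hA : IsAffineSet A) (hgp : GenPos A)
    (n : ℕ) (hn : A.ncard = n) :
    {σ : Fin n → Fin n → Fin n → ℝ | ∃ e : Fin n ≃ ↥A,
        ∀ i j k : Fin n, σ i j k = sgn3 (e i) (e j) (e k)}.ncard
      = n.factorial / Nat.card (symGroup A) ∧
    (n - 1).factorial ≤ n.factorial / Nat.card (symGroup A) := by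
  classical
  have hfin : A.Finite := hA.1
  haveI : Finite ↥A := hfin.to_subtype
  haveI : Fintype ↥A := hfin.fintype
  have hcardA : Nat.card ↥A = n := by rw [← hn, Nat.card_coe_set_eq]
  -- the labeling map
  set Φ : (Fin n ≃ ↥A) → (Fin n → Fin n → Fin n → ℝ) :=
    fun e => fun i j k => sgn3 (e i) (e j) (e k) with hΦ
  have hSrange : {σ : Fin n → Fin n → Fin n → ℝ | ∃ e : Fin n ≃ ↥A,
      ∀ i j k : Fin n, σ i j k = sgn3 (e i) (e j) (e k)} = Set.range Φ := by
    ext σ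
    constructor
    · rintro ⟨e, he⟩
      exact ⟨e, by funext i j k; exact (he i j k).symm⟩
    · rintro ⟨e, he⟩
      exact ⟨e, fun i j k => by rw [← he]⟩
  -- key: Φ e = Φ e' iff they differ by a symmetry
  have hkey : ∀ e e' : Fin n ≃ ↥A, Φ e = Φ e' ↔ e.symm.trans e' ∈ symGroup A := by
    intro e e'
    constructor
    · intro h
      intro a b c
      have h1 := congrFun (congrFun (congrFun h (e.symm a)) (e.symm b)) (e.symm c)
      simp only [hΦ, Equiv.apply_symm_apply] at h1
      simpa [Equiv.trans_apply] using h1.symm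
    · intro h
      funext i j k
      have := h (e i) (e j) (e k)
      simpa [Equiv.trans_apply, Equiv.symm_apply_apply] using this.symm
  -- the quotient by the kernel of Φ
  set Q := Quotient (Setoid.ker Φ) with hQ
  have hcardS : Nat.card Q = Nat.card ↥(Set.range Φ) :=
    Nat.card_congr (Setoid.quotientKerEquivRange Φ)
  -- bijection (Fin n ≃ ↥A) ≃ Q × symGroup A
  have hbij : Function.Bijective (fun x : Q × (symGroup A) =>
      (Quotient.out (s := Setoid.ker Φ) x.1).trans (x.2 : Equiv.Perm ↥A)) := by
    constructor
    · rintro ⟨ω, f⟩ ⟨ω', f'⟩ hx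
      simp only at hx
      have hΦf : ∀ (e : Fin n ≃ ↥A) (g : symGroup A),
          Φ (e.trans (g : Equiv.Perm ↥A)) = Φ e := by
        intro e g
        funext i j k
        exact g.2 (e i) (e j) (e k)
      have hΦout : Φ (Quotient.out (s := Setoid.ker Φ) ω)
          = Φ (Quotient.out (s := Setoid.ker Φ) ω') :=
        calc Φ (Quotient.out (s := Setoid.ker Φ) ω)
            = Φ ((Quotient.out (s := Setoid.ker Φ) ω).trans (f : Equiv.Perm ↥A)) :=
              (hΦf _ f).symm
          _ = Φ ((Quotient.out (s := Setoid.ker Φ) ω').trans (f' : Equiv.Perm ↥A)) := by rw [hx]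
          _ = Φ (Quotient.out (s := Setoid.ker Φ) ω') := hΦf _ f'
      have hωω' : ω = ω' := by
        rw [← Quotient.out_eq ω, ← Quotient.out_eq ω']
        exact Quotient.sound hΦout
      subst hωω'
      have hff' : (f : Equiv.Perm ↥A) = (f' : Equiv.Perm ↥A) := by
        have := congrArg (fun e => (Quotient.out (s := Setoid.ker Φ) ω).symm.trans e) hx
        simpa [← Equiv.trans_assoc] using this
      rw [Prod.mk.injEq]
      exact ⟨rfl, Subtype.ext hff'⟩
    · intro e
      set ω : Q := Quotient.mk _ e with hω
      have houte : Φ (Quotient.out (s := Setoid.ker Φ) ω) = Φ e :=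
        Quotient.exact (Quotient.out_eq ω)
      set g : Equiv.Perm ↥A := (Quotient.out (s := Setoid.ker Φ) ω).symm.trans e with hg
      have hgmem : g ∈ symGroup A := (hkey _ _).mp houte
      refine ⟨⟨ω, ⟨g, hgmem⟩⟩, ?_⟩
      simp [hg, ← Equiv.trans_assoc]
  have hcount : (n.factorial : ℕ) = Nat.card Q * Nat.card (symGroup A) := by
    have h1 : Nat.card (Fin n ≃ ↥A) = n.factorial := by
      have hc' : Fintype.card ↥A = n := by rw [← Nat.card_eq_fintype_card]; exact hcardA
      have e0 : ↥A ≃ Fin n := Fintype.equivFinOfCardEq hc'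
      rw [Nat.card_eq_fintype_card, Fintype.card_equiv e0.symm, Fintype.card_fin]
    rw [← h1, ← Nat.card_prod]
    exact (Nat.card_congr (Equiv.ofBijective _ hbij)).symm
  have hFpos : 0 < Nat.card (symGroup A) := Nat.card_pos
  have hmain : Nat.card Q = n.factorial / Nat.card (symGroup A) := by
    rw [hcount, Nat.mul_div_cancel _ hFpos]
  constructor
  · rw [hSrange, ← Nat.card_coe_set_eq, ← hcardS, hmain]
  · -- lower bound
    rcases Nat.eq_zero_or_pos n with hn0 | hnpos
    · subst hn0
      have hAempty : A = ∅ := (Set.ncard_eq_zero hfin).mp hn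
      have : Nat.card (symGroup A) = 1 := by
        have : ∀ f : symGroup A, f = 1 := by
          intro f
          apply Subtype.ext
          apply Equiv.ext
          intro q
          exact absurd (hAempty ▸ q.2 : (q : E3) ∈ (∅ : Set E3)) (Set.notMem_empty _)
        exact Nat.card_eq_one_iff_unique.mpr ⟨⟨fun a b => (this a).trans (this b).symm⟩, ⟨1⟩⟩
      rw [this]
      norm_num [Nat.factorial]
    · have hAne : A.Nonempty := by
        rw [← Set.nonempty_coe_sort]
        have : 0 < Nat.card ↥A := hcardA ▸ hnpos
        exact Nat.card_pos_iff.mp this |>.1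
      obtain ⟨p, hpA, hpext⟩ := exists_extreme hA hAne
      -- the map F → A, f ↦ f p is injective
      have hinj : Function.Injective (fun f : symGroup A => (f : Equiv.Perm ↥A) ⟨p, hpA⟩) := by
        intro f g h
        simp only at h
        have h2 : ((g⁻¹ * f : symGroup A) : Equiv.Perm ↥A) ⟨p, hpA⟩ = ⟨p, hpA⟩ := by
          simp [Equiv.Perm.mul_apply, h]
        have := symGroup_fix_extreme hA hgp (p := ⟨p, hpA⟩) hpext (g⁻¹ * f).2 h2
        have h3 : (g⁻¹ * f : symGroup A) = 1 := Subtype.ext this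
        rw [mul_eq_one_iff_inv_eq] at h3
        simpa using h3.symm
      have hle : Nat.card (symGroup A) ≤ n := by
        rw [← hcardA]
        exact Nat.card_le_card_of_injective _ hinj
      have hfact : n.factorial = n * (n - 1).factorial := by
        conv_lhs => rw [← Nat.sub_add_cancel hnpos]
        rw [Nat.factorial_succ, Nat.sub_add_cancel hnpos]
      calc (n - 1).factorial = n.factorial / n := by
            rw [hfact, Nat.mul_div_cancel_left _ hnpos]
        _ ≤ n.factorial / Nat.card (symGroup A) := Nat.div_le_div_left hle hFpos
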